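/- Let α, β, κ, λ be real numbers with α ≠ 0 and (αβ ≠ 0 or ακ ≠ 0). Then the HSA dynamo system ẋ = x(y-1) - βz, ẏ = α(1-x²) - κy, ż = x - λz admits no polynomial first integral: there is no nonconstant polynomial h ∈ ℝ[x,y,z] with (x(y-1) - βz)∂h/∂x + (α(1-x²) - κy)∂h/∂y + (x - λz)∂h/∂z = 0. -/

import Mathlib

open MvPolynomial

namespace HSAProof


structure HSA (α β κ lam : ℝ) (H : ℤ → ℤ → ℤ → ℝ) (n : ℤ) : Prop where
  hzero : ∀ a b c : ℤ, a < 0 ∨ b < 0 ∨ c < 0 → H a b c = 0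
  hdeg : ∀ a b c : ℤ, n < a + b + c → H a b c = 0
  hE : ∀ a b c : ℤ,
      (a:ℝ) * H a (b-1) c - (a:ℝ) * H a b c - β*((a:ℝ)+1)*H (a+1) b (c-1)
        + α*((b:ℝ)+1)*H a (b+1) c - α*((b:ℝ)+1)*H (a-2) (b+1) c - κ*(b:ℝ)*H a b c
        + ((c:ℝ)+1)*H (a-1) b (c+1) - lam*(c:ℝ)*H a b c = 0

variable {α β κ lam : ℝ} {H : ℤ → ℤ → ℤ → ℝ} {n : ℤ}

theorem Tp (S : HSA α β κ lam H n) (a b c : ℤ) (hs : a + b + c = n) :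
    (a:ℝ) * H a b c = α*((b:ℝ)+2)*H (a-2) (b+2) c := by
  have E := S.hE a (b+1) c
  rw [S.hdeg a (b+1) c (by omega), S.hdeg (a+1) (b+1) (c-1) (by omega),
      S.hdeg a (b+1+1) c (by omega), S.hdeg (a-1) (b+1) (c+1) (by omega),
      show b+1-1 = b by ring, show b+1+1 = b+2 by ring] at E
  push_cast at E ⊢
  linarith [E]

/-- Top-degree coefficients with odd first index vanish. -/
theorem oddA (S : HSA α β κ lam H n) (hα : α ≠ 0) :
    ∀ a b c : ℤ, a + b + c = n → Odd a → H a b c = 0 := by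
  have key : ∀ t : ℕ, ∀ a b c : ℤ, a = 2*(t:ℤ)+1 → a + b + c = n → H a b c = 0 := by
    intro t
    induction t with
    | zero =>
      intro a b c ha hs
      have h1 := Tp S a b c hs
      rw [show a-2 = -1 by omega, S.hzero (-1) (b+2) c (by omega)] at h1
      have ha' : (a:ℝ) ≠ 0 := by
        simp only [ne_eq, Int.cast_eq_zero]; omega
      rcases mul_eq_zero.1 (by linarith [h1] : (a:ℝ) * H a b c = 0) with hc | hc
      · exact absurd hc ha'
      · exact hc
    | succ t ih =>
      intro a b c ha hs
      have h1 := Tp S a b c hs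
      rw [ih (a-2) (b+2) c (by push_cast at ha ⊢; omega) (by omega)] at h1
      have ha' : (a:ℝ) ≠ 0 := by
        simp only [ne_eq, Int.cast_eq_zero]; omega
      rcases mul_eq_zero.1 (by linarith [h1] : (a:ℝ) * H a b c = 0) with hc | hc
      · exact absurd hc ha'
      · exact hc
  intro a b c hs ho
  rcases lt_or_ge a 0 with hneg | hpos
  · exact S.hzero a b c (by omega)
  · obtain ⟨r, hr⟩ := ho
    exact key ((a-1)/2).toNat a b c (by omega) hs

/-- Top-degree coefficients with odd second index vanish. -/
theorem oddB (S : HSA α β κ lam H n) (hα : α ≠ 0) :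
    ∀ a b c : ℤ, a + b + c = n → Odd b → H a b c = 0 := by
  have key : ∀ t : ℕ, ∀ a b c : ℤ, b = 2*(t:ℤ)+1 → a + b + c = n → H a b c = 0 := by
    intro t
    induction t with
    | zero =>
      intro a b c hb hs
      have h1 := Tp S (a+2) (b-2) c (by omega)
      rw [S.hzero (a+2) (b-2) c (by omega), show a+2-2 = a by ring,
          show b-2+2 = b by ring] at h1
      have hb1 : b = 1 := by omega
      have hb' : ((b:ℝ)-2)+2 ≠ 0 := by rw [hb1]; norm_num
      have h2 : α * (((b:ℝ)-2)+2) * H a b c = 0 := by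
        push_cast at h1 ⊢; linarith [h1]
      rcases mul_eq_zero.1 h2 with hc | hc
      · exact absurd hc (mul_ne_zero hα hb')
      · exact hc
    | succ t ih =>
      intro a b c hb hs
      have h1 := Tp S (a+2) (b-2) c (by omega)
      rw [ih (a+2) (b-2) c (by push_cast at hb ⊢; omega) (by omega),
          show a+2-2 = a by ring, show b-2+2 = b by ring] at h1
      have hb' : ((b:ℝ)-2)+2 ≠ 0 := by
        have : ((b:ℝ)-2)+2 = (b:ℝ) := by ring
        rw [this]; simp only [ne_eq, Int.cast_eq_zero]; omega
      have h2 : α * (((b:ℝ)-2)+2) * H a b c = 0 := by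
        push_cast at h1 ⊢; linarith [h1]
      rcases mul_eq_zero.1 h2 with hc | hc
      · exact absurd hc (mul_ne_zero hα hb')
      · exact hc
  intro a b c hs ho
  rcases lt_or_ge b 0 with hneg | hpos
  · exact S.hzero a b c (by omega)
  · obtain ⟨r, hr⟩ := ho
    exact key ((b-1)/2).toNat a b c (by omega) hs

/-- Chain to the `a = 0` column: if the column entry vanishes so does the chain entry. -/
theorem chainDown (S : HSA α β κ lam H n) (hα : α ≠ 0) :
    ∀ k : ℕ, ∀ a b c : ℤ, a = 2*(k:ℤ) → a + b + c = n → H 0 (b+a) c = 0 → H a b c = 0 := by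
  intro k
  induction k with
  | zero =>
    intro a b c ha hs h0
    rw [show a = 0 by omega] at *
    rw [show b + 0 = b by ring] at h0
    exact h0
  | succ k ih =>
    intro a b c ha hs h0
    have h1 := Tp S a b c hs
    rw [ih (a-2) (b+2) c (by push_cast at ha ⊢; omega) (by omega)
        (by rw [show b+2+(a-2) = b+a by ring]; exact h0)] at h1
    have ha' : (a:ℝ) ≠ 0 := by simp only [ne_eq, Int.cast_eq_zero]; omega
    rcases mul_eq_zero.1 (by linarith [h1] : (a:ℝ) * H a b c = 0) with hc | hc
    · exact absurd hc ha'
    · exact hc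

/-- Divisibility condition C1. -/
theorem C1 (S : HSA α β κ lam H n) (hα : α ≠ 0) (b c : ℤ) (hs : b + c = n) :
    (κ*(b:ℝ) + lam*(c:ℝ)) * H 0 b c = 0 := by
  have E := S.hE 0 b c
  rw [oddA S hα (0+1) b (c-1) (by omega) ⟨0, by ring⟩,
      S.hdeg 0 (b+1) c (by omega),
      S.hzero (0-2) (b+1) c (by omega),
      S.hzero (0-1) b (c+1) (by omega)] at E
  push_cast at E ⊢
  linarith [E]

/-- The odd-level relation `star`. -/
theorem star (S : HSA α β κ lam H n) (hα : α ≠ 0) (a b c : ℤ) (ho : Odd a)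
    (hs : a + b + c = n) :
    (a:ℝ)*H a (b-1) c - α*((b:ℝ)+1)*H (a-2) (b+1) c - β*((a:ℝ)+1)*H (a+1) b (c-1)
      + ((c:ℝ)+1)*H (a-1) b (c+1) = 0 := by
  have E := S.hE a b c
  rw [oddA S hα a b c hs ho, S.hdeg a (b+1) c (by omega)] at E
  push_cast at E ⊢
  linarith [E]


noncomputable def Yseq (T : ℕ) : ℕ → ℝ
  | 0 => 1
  | t+1 => ((2*(T:ℝ)-2*(t:ℝ)-1) * Yseq T t + ((T.choose (t+1)):ℝ)) / (2*(t:ℝ)+3)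

theorem Ypos (T : ℕ) : ∀ t : ℕ, t ≤ T → 0 < Yseq T t := by
  intro t
  induction t with
  | zero => intro _; rw [Yseq]; norm_num
  | succ t ih =>
    intro ht
    rw [Yseq]
    apply div_pos
    · have h1 : 0 < Yseq T t := ih (by omega)
      have h2 : (0:ℝ) < 2*(T:ℝ)-2*(t:ℝ)-1 := by
        have : (t:ℝ)+1 ≤ (T:ℝ) := by exact_mod_cast ht
        linarith
      have h3 : (0:ℝ) ≤ ((T.choose (t+1)):ℝ) := Nat.cast_nonneg _
      nlinarith
    · positivity

/-- The key elimination along the kernel chain: the exact relation `C2`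
    plus vanishing of the odd first-index entries one degree down. -/
theorem bigchain (S : HSA α β κ lam H n) (hα : α ≠ 0) (T : ℕ) (c : ℤ)
    (hm : 2*(T:ℤ)+1+c = n) :
    (α*β*(2*(T:ℝ)+2)*H 0 (2*(T:ℤ)+2) (c-1) = ((c:ℝ)+1)*H 0 (2*(T:ℤ)) (c+1))
    ∧ ∀ t : ℕ, ∀ a b : ℤ, a = 2*(t:ℤ)+1 → b = 2*(T:ℤ)-2*(t:ℤ)-1 → t ≤ T →
        H a b c = 0 := by
  have chainA : ∀ k : ℕ, ∀ a b : ℤ, a = 2*(k:ℤ) → b = 2*(T:ℤ)+2-a → k ≤ T+1 →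
      H a b (c-1) = α^k * (((T+1).choose k):ℝ) * H 0 (2*(T:ℤ)+2) (c-1) := by
    intro k
    induction k with
    | zero =>
      intro a b ha hb _
      rw [show a = 0 by omega, show b = 2*(T:ℤ)+2 by omega]
      simp
    | succ k ih =>
      intro a b ha hb hk
      have haR : (a:ℝ) = 2*(k:ℝ)+2 := by
        rw [show a = 2*(k:ℤ)+2 by omega]; push_cast; ring
      have hbR : (b:ℝ) = 2*(T:ℝ)-2*(k:ℝ) := by
        rw [show b = 2*(T:ℤ)-2*(k:ℤ) by omega]; push_cast; ring
      have h1 := Tp S a b (c-1) (by omega)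
      rw [ih (a-2) (b+2) (by push_cast at ha ⊢; omega) (by omega) (by omega)] at h1
      have hch : (((T+1).choose (k+1)):ℝ) * ((k:ℝ)+1)
          = (((T+1).choose k):ℝ) * ((T:ℝ)+1-(k:ℝ)) := by
        have h0 := Nat.choose_succ_right_eq (T+1) k
        rw [show (T:ℝ)+1-(k:ℝ) = ((T+1-k:ℕ):ℝ) by
          rw [Nat.cast_sub (by omega)]; push_cast; ring]
        exact_mod_cast congrArg (Nat.cast (R := ℝ)) h0
      have ha' : (a:ℝ) ≠ 0 := by rw [haR]; positivity
      apply mul_left_cancel₀ ha'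
      rw [h1, haR, hbR]
      push_cast
      linear_combination (-2*α^(k+1) * H 0 (2*(T:ℤ)+2) (c-1)) * hch
  have chainB : ∀ k : ℕ, ∀ a b : ℤ, a = 2*(k:ℤ) → b = 2*(T:ℤ)-a → k ≤ T →
      H a b (c+1) = α^k * ((T.choose k):ℝ) * H 0 (2*(T:ℤ)) (c+1) := by
    intro k
    induction k with
    | zero =>
      intro a b ha hb _
      rw [show a = 0 by omega, show b = 2*(T:ℤ) by omega]
      simp
    | succ k ih =>
      intro a b ha hb hk
      have haR : (a:ℝ) = 2*(k:ℝ)+2 := by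
        rw [show a = 2*(k:ℤ)+2 by omega]; push_cast; ring
      have hbR : (b:ℝ) = 2*(T:ℝ)-2*(k:ℝ)-2 := by
        rw [show b = 2*(T:ℤ)-2*(k:ℤ)-2 by omega]; push_cast; ring
      have h1 := Tp S a b (c+1) (by omega)
      rw [ih (a-2) (b+2) (by push_cast at ha ⊢; omega) (by omega) (by omega)] at h1
      have hch : ((T.choose (k+1)):ℝ) * ((k:ℝ)+1)
          = ((T.choose k):ℝ) * ((T:ℝ)-(k:ℝ)) := by
        have h0 := Nat.choose_succ_right_eq T k
        rw [show (T:ℝ)-(k:ℝ) = ((T-k:ℕ):ℝ) by rw [Nat.cast_sub (by omega)]]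
        exact_mod_cast congrArg (Nat.cast (R := ℝ)) h0
      have ha' : (a:ℝ) ≠ 0 := by rw [haR]; positivity
      apply mul_left_cancel₀ ha'
      rw [h1, haR, hbR]
      push_cast
      linear_combination (-2*α^(k+1) * H 0 (2*(T:ℤ)) (c+1)) * hch
  have vlem : ∀ t : ℕ, ∀ a b : ℤ, a = 2*(t:ℤ)+1 → b = 2*(T:ℤ)-2*(t:ℤ)-1 → t ≤ T →
      H a b c = α^t * Yseq T t *
        (α*β*(2*(T:ℝ)+2)*H 0 (2*(T:ℤ)+2) (c-1) - ((c:ℝ)+1)*H 0 (2*(T:ℤ)) (c+1)) := by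
    intro t
    induction t with
    | zero =>
      intro a b ha hb _
      have haR : (a:ℝ) = 1 := by rw [show a = 1 by omega]; norm_num
      have hbR : (b:ℝ) = 2*(T:ℝ)-1 := by
        rw [show b = 2*(T:ℤ)-1 by omega]; push_cast; ring
      have E := star S hα a (b+1) c ⟨0, by omega⟩ (by omega)
      rw [show b+1-1 = b by ring, show b+1+1 = b+2 by ring] at E
      rw [S.hzero (a-2) (b+2) c (by omega)] at E
      rw [chainA 1 (a+1) (b+1) (by omega) (by omega) (by omega)] at E
      rw [show (a-1) = 0 by omega, show (b+1) = 2*(T:ℤ) by omega] at E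
      rw [Yseq]
      simp only [Nat.choose_one_right] at E
      push_cast at E ⊢
      rw [haR] at E
      linear_combination E
    | succ t ih =>
      intro a b ha hb ht
      have haR : (a:ℝ) = 2*(t:ℝ)+3 := by
        rw [show a = 2*(t:ℤ)+3 by omega]; push_cast; ring
      have hbR : (b:ℝ) = 2*(T:ℝ)-2*(t:ℝ)-3 := by
        rw [show b = 2*(T:ℤ)-2*(t:ℤ)-3 by omega]; push_cast; ring
      have E := star S hα a (b+1) c ⟨(t:ℤ)+1, by omega⟩ (by omega)
      rw [show b+1-1 = b by ring, show b+1+1 = b+2 by ring] at E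
      rw [ih (a-2) (b+2) (by push_cast at ha ⊢; omega) (by push_cast at hb ⊢; omega)
          (by omega)] at E
      rw [chainA (t+2) (a+1) (b+1) (by push_cast at ha ⊢; omega)
          (by push_cast at ha hb ⊢; omega) (by omega)] at E
      rw [chainB (t+1) (a-1) (b+1) (by push_cast at ha ⊢; omega)
          (by push_cast at ha hb ⊢; omega) (by omega)] at E
      have hch : ((T:ℝ)+1) * ((T.choose (t+1)):ℝ)
          = (((T+1).choose (t+2)):ℝ) * ((t:ℝ)+2) := by
        have h0 := Nat.add_one_mul_choose_eq T (t+1)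
        exact_mod_cast congrArg (Nat.cast (R := ℝ)) h0
      have hY : (2*(t:ℝ)+3) * Yseq T (t+1)
          = (2*(T:ℝ)-2*(t:ℝ)-1) * Yseq T t + ((T.choose (t+1)):ℝ) := by
        rw [Yseq]; field_simp
      have ha' : (a:ℝ) ≠ 0 := by rw [haR]; positivity
      apply mul_left_cancel₀ ha'
      push_cast at E ⊢
      rw [haR, hbR] at E
      rw [haR]
      linear_combination E - (α^(t+1) *
          (α*β*(2*(T:ℝ)+2)*H 0 (2*(T:ℤ)+2) (c-1) - ((c:ℝ)+1)*H 0 (2*(T:ℤ)) (c+1))) * hY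
        - (2*β*α^(t+2) * H 0 (2*(T:ℤ)+2) (c-1)) * hch
  -- terminal equation
  have hΔ : α*β*(2*(T:ℝ)+2)*H 0 (2*(T:ℤ)+2) (c-1) = ((c:ℝ)+1)*H 0 (2*(T:ℤ)) (c+1) := by
    have E := star S hα (2*(T:ℤ)+1) 0 c ⟨(T:ℤ), by ring⟩ (by omega)
    rw [S.hzero (2*(T:ℤ)+1) (0-1) c (by omega)] at E
    rw [chainA (T+1) (2*(T:ℤ)+1+1) 0 (by omega) (by omega) (le_refl _)] at E
    rw [chainB T (2*(T:ℤ)+1-1) 0 (by omega) (by omega) (le_refl _)] at E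
    simp only [Nat.choose_self, Nat.cast_one] at E
    rcases Nat.eq_zero_or_pos T with hT | hT
    · subst hT
      rw [S.hzero (2*((0:ℕ):ℤ)+1-2) (0+1) c (by omega)] at E
      push_cast at E ⊢
      linear_combination -E
    · obtain ⟨T', rfl⟩ : ∃ T', T = T'+1 := ⟨T-1, by omega⟩
      rw [vlem T' (2*((T'+1:ℕ):ℤ)+1-2) (0+1) (by omega) (by omega) (by omega)] at E
      have hY := Ypos (T'+1) T' (by omega)
      have key : α^(T'+1) * (Yseq (T'+1) T' + 1) *
          (α*β*(2*((T'+1:ℕ):ℝ)+2)*H 0 (2*((T'+1:ℕ):ℤ)+2) (c-1)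
            - ((c:ℝ)+1)*H 0 (2*((T'+1:ℕ):ℤ)) (c+1)) = 0 := by
        push_cast at E ⊢
        linear_combination -E
      have hne : α^(T'+1) * (Yseq (T'+1) T' + 1) ≠ 0 :=
        mul_ne_zero (pow_ne_zero _ hα) (by linarith)
      have h0 := (mul_eq_zero.1 key).resolve_left hne
      linarith [h0]
  exact ⟨hΔ, fun t a b ha hb ht => by
    rw [vlem t a b ha hb ht, hΔ]; ring⟩


/-- All top-degree coefficients in the `a = 0` column vanish. -/
theorem zcol (S : HSA α β κ lam H n) (hα : α ≠ 0) (hβκ : β ≠ 0 ∨ κ ≠ 0) (hn : 1 ≤ n) :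
    ∀ s c : ℤ, s + c = n → H 0 s c = 0 := by
  intro s c hsc
  rcases lt_or_ge s 0 with hs | hs
  · exact S.hzero 0 s c (by omega)
  rcases lt_or_ge c 0 with hc | hc
  · exact S.hzero 0 s c (by omega)
  rcases Int.even_or_odd s with hse | hso
  swap
  · exact oddB S hα 0 s c (by omega) hso
  rcases Int.even_or_odd n with hne | hno
  swap
  -- n odd
  · have oddz : ∀ j : ℕ, ∀ s' c' : ℤ, s' + c' = n → c' = 1+2*(j:ℤ) → H 0 s' c' = 0 := by
      intro j
      induction j with
      | zero =>
        intro s' c' hs' hc'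
        obtain ⟨T, hT⟩ : ∃ T : ℕ, n = 2*(T:ℤ)+1 := by
          obtain ⟨m, hm⟩ := hno
          exact ⟨m.toNat, by omega⟩
        have R := (bigchain S hα T 0 (by omega)).1
        rw [S.hzero 0 (2*(T:ℤ)+2) (0-1) (by omega)] at R
        have R2 : (((0:ℤ):ℝ)+1) * H 0 (2*(T:ℤ)) (0+1) = 0 := by linarith [R]
        have hcoef : (((0:ℤ):ℝ)+1) ≠ 0 := by norm_num
        rw [show s' = 2*(T:ℤ) by omega, show c' = 0+1 by omega]
        exact (mul_eq_zero.1 R2).resolve_left hcoef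
      | succ j ih =>
        intro s' c' hs' hc'
        rcases lt_or_ge s' 0 with h1 | h1
        · exact S.hzero 0 s' c' (by omega)
        obtain ⟨T, hT⟩ : ∃ T : ℕ, n - (2*(j:ℤ)+2) = 2*(T:ℤ)+1 := by
          obtain ⟨m, hm⟩ := hno
          exact ⟨(m - j - 1).toNat, by omega⟩
        have R := (bigchain S hα T (2*(j:ℤ)+2) (by omega)).1
        rw [show (2*(j:ℤ)+2)-1 = 1+2*(j:ℤ) by ring] at R
        rw [ih (2*(T:ℤ)+2) (1+2*(j:ℤ)) (by omega) rfl] at R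
        rw [show (2*(j:ℤ)+2)+1 = 3+2*(j:ℤ) by ring] at R
        rw [show s' = 2*(T:ℤ) by omega, show c' = 3+2*(j:ℤ) by omega]
        have hcoef : ((2*(j:ℤ)+2 : ℤ):ℝ) + 1 ≠ 0 := by push_cast; positivity
        have := mul_eq_zero.1 (by linarith [R] :
          (((2*(j:ℤ)+2 : ℤ):ℝ)+1) * H 0 (2*(T:ℤ)) (3+2*(j:ℤ)) = 0)
        exact this.resolve_left hcoef
    obtain ⟨m, hm⟩ := hno
    obtain ⟨u, hu⟩ := hse
    exact oddz ((c-1)/2).toNat s c hsc (by omega)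
  -- n even
  · have hc_even : Even c := by
      obtain ⟨u, hu⟩ := hse; obtain ⟨v, hv⟩ := hne
      exact ⟨c/2, by omega⟩
    rcases eq_or_ne β 0 with hβ | hβ
    · -- β = 0, κ ≠ 0
      have hκ : κ ≠ 0 := hβκ.resolve_left (by simp [hβ])
      rcases eq_or_ne c 0 with hc0 | hc0
      · have hC := C1 S hα s c (by omega)
        have : (κ*(s:ℝ) + lam*(c:ℝ)) ≠ 0 := by
          rw [hc0, show s = n by omega]
          have : (n:ℝ) ≠ 0 := by
            simp only [ne_eq, Int.cast_eq_zero]; omega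
          push_cast
          simp only [Int.cast_zero, mul_zero, add_zero]
          exact mul_ne_zero hκ this
        exact (mul_eq_zero.1 hC).resolve_left this
      · obtain ⟨T, hT⟩ : ∃ T : ℕ, s + 1 = 2*(T:ℤ)+1 := by
          obtain ⟨u, hu⟩ := hse
          exact ⟨u.toNat, by omega⟩
        have R := (bigchain S hα T (c-1) (by omega)).1
        rw [hβ] at R
        rw [show c-1+1 = c by ring, show 2*(T:ℤ) = s by omega] at R
        have hcoef : ((c-1 : ℤ):ℝ) + 1 ≠ 0 := by
          have : (1:ℝ) ≤ ((c:ℤ):ℝ) := by exact_mod_cast (by omega : (1:ℤ) ≤ c)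
          push_cast
          linarith
        have := mul_eq_zero.1 (by linarith [R] : (((c-1:ℤ):ℝ)+1) * H 0 s c = 0)
        exact this.resolve_left hcoef
    · -- β ≠ 0
      by_contra hne0
      have hn2 : 2 ≤ n := by obtain ⟨v, hv⟩ := hne; omega
      obtain ⟨u0, hu0⟩ := hse
      -- downward nonvanishing chain
      have Pnz : ∀ j : ℕ, ∀ s' : ℤ, s' = s - 2*(j:ℤ) → 0 ≤ s' → H 0 s' (n-s') ≠ 0 := by
        intro j
        induction j with
        | zero =>
          intro s' hs' _
          rw [show s' = s by omega, show n - s = c by omega]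
          exact hne0
        | succ j ih =>
          intro s' hs' h0
          obtain ⟨T, hT⟩ : ∃ T : ℕ, s' + 1 = 2*(T:ℤ)+1 :=
            ⟨(u0 - j - 1).toNat, by omega⟩
          have R := (bigchain S hα T (n-s'-1) (by omega)).1
          rw [show n-s'-1+1 = n-s' by ring, show n-s'-1-1 = n-(s'+2) by ring,
              show 2*(T:ℤ)+2 = s'+2 by omega, show 2*(T:ℤ) = s' by omega] at R
          intro hzero0
          rw [hzero0, mul_zero] at R
          have hprev := ih (s'+2) (by omega) (by omega)
          have hTc : (2*(T:ℝ)+2) ≠ 0 := by positivity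
          have h1 := (mul_eq_zero.1 R).resolve_right hprev
          have h2 := (mul_eq_zero.1 h1).resolve_right hTc
          rcases mul_eq_zero.1 h2 with h | h
          · exact hα h
          · exact hβ h
      have H00n : H 0 0 n ≠ 0 := by
        have := Pnz (s/2).toNat 0 (by omega) (by omega)
        rwa [show n - 0 = n by ring] at this
      have H2 : H 0 2 (n-2) ≠ 0 := by
        have R := (bigchain S hα 0 (n-1) (by omega)).1
        rw [show n-1+1 = n by ring, show n-1-1 = n-2 by ring,
            show 2*((0:ℕ):ℤ)+2 = 2 by norm_num, show 2*((0:ℕ):ℤ) = 0 by norm_num] at R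
        intro hzero2
        rw [hzero2, mul_zero] at R
        have hcoef : ((n-1:ℤ):ℝ)+1 ≠ 0 := by
          have : (1:ℝ) ≤ ((n:ℤ):ℝ) := by exact_mod_cast hn
          push_cast; linarith
        exact H00n ((mul_eq_zero.1 R.symm).resolve_left hcoef)
      -- kill lam and κ
      have hlam : lam = 0 := by
        have hC := C1 S hα 0 n (by omega)
        have := (mul_eq_zero.1 hC).resolve_right H00n
        have hnR : ((n:ℤ):ℝ) ≠ 0 := by simp only [ne_eq, Int.cast_eq_zero]; omega
        rw [show (κ*((0:ℤ):ℝ) + lam*(n:ℝ)) = lam*(n:ℝ) by push_cast; ring] at this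
        exact (mul_eq_zero.1 this).resolve_right hnR
      have hκ0 : κ = 0 := by
        have hC := C1 S hα 2 (n-2) (by omega)
        have := (mul_eq_zero.1 hC).resolve_right H2
        rw [hlam] at this
        rw [show (κ*((2:ℤ):ℝ) + 0*((n-2:ℤ):ℝ)) = κ*2 by push_cast; ring] at this
        have : κ * 2 = 0 := this
        linarith [this]
      -- the L2 relation at (1, n-2)
      have E := S.hE 0 1 (n-2)
      rw [S.hzero (0-2) (1+1) (n-2) (by omega), S.hzero (0-1) 1 (n-2+1) (by omega),
          hκ0, hlam] at E
      have hodd1 : H (0+1) 1 (n-2-1) = 0 := by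
        rcases eq_or_ne n 2 with hn2' | hn2'
        · exact S.hzero (0+1) 1 (n-2-1) (by omega)
        · have := (bigchain S hα 1 (n-3) (by omega)).2 0 (0+1) 1 (by norm_num)
            (by norm_num) (by omega)
          rwa [show n-2-1 = n-3 by ring]
      rw [hodd1] at E
      have hfin : α * 2 * H 0 (1+1) (n-2) = 0 := by push_cast at E ⊢; linarith [E]
      rw [show (1:ℤ)+1 = 2 by ring] at hfin
      have h2c : α * 2 ≠ 0 := by
        intro hh
        exact hα (by linarith [mul_eq_zero.1 hh] : α = 0)
      exact H2 ((mul_eq_zero.1 hfin).resolve_left (by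
        intro hh
        rcases mul_eq_zero.1 hh with h | h
        · exact hα h
        · norm_num at h))

/-- All top-degree coefficients vanish. -/
theorem topzero (S : HSA α β κ lam H n) (hα : α ≠ 0) (hβκ : β ≠ 0 ∨ κ ≠ 0) (hn : 1 ≤ n) :
    ∀ a b c : ℤ, a + b + c = n → H a b c = 0 := by
  intro a b c hsum
  rcases lt_or_ge a 0 with h | ha0
  · exact S.hzero a b c (by omega)
  rcases Int.even_or_odd a with hae | hao
  swap
  · exact oddA S hα a b c hsum hao
  exact chainDown S hα (a/2).toNat a b c (by obtain ⟨u,hu⟩ := hae; omega) hsum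
    (zcol S hα hβκ hn (b+a) c (by omega))



noncomputable def fp (a b c : ℕ) : Fin 3 →₀ ℕ :=
  Finsupp.single 0 a + Finsupp.single 1 b + Finsupp.single 2 c

@[simp] lemma fp_apply0 (a b c : ℕ) : fp a b c 0 = a := by
  simp [fp, Finsupp.single_apply]

@[simp] lemma fp_apply1 (a b c : ℕ) : fp a b c 1 = b := by
  simp [fp, Finsupp.single_apply]

@[simp] lemma fp_apply2 (a b c : ℕ) : fp a b c 2 = c := by
  simp [fp, Finsupp.single_apply]

lemma fp_apply (a b c : ℕ) (j : Fin 3) :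
    fp a b c j = if j = 0 then a else if j = 1 then b else c := by
  fin_cases j <;> simp

lemma fp_sub0 (a b c : ℕ) : fp a b c - Finsupp.single 0 1 = fp (a-1) b c := by
  ext j
  rw [Finsupp.tsub_apply]
  fin_cases j <;> simp [Finsupp.single_apply]

lemma fp_sub1 (a b c : ℕ) : fp a b c - Finsupp.single 1 1 = fp a (b-1) c := by
  ext j
  rw [Finsupp.tsub_apply]
  fin_cases j <;> simp [Finsupp.single_apply]

lemma fp_sub2 (a b c : ℕ) : fp a b c - Finsupp.single 2 1 = fp a b (c-1) := by
  ext j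
  rw [Finsupp.tsub_apply]
  fin_cases j <;> simp [Finsupp.single_apply]

lemma fp_add0 (a b c : ℕ) : fp a b c + Finsupp.single 0 1 = fp (a+1) b c := by
  ext j
  rw [Finsupp.add_apply]
  fin_cases j <;> simp [Finsupp.single_apply]

lemma fp_add1 (a b c : ℕ) : fp a b c + Finsupp.single 1 1 = fp a (b+1) c := by
  ext j
  rw [Finsupp.add_apply]
  fin_cases j <;> simp [Finsupp.single_apply]

lemma fp_add2 (a b c : ℕ) : fp a b c + Finsupp.single 2 1 = fp a b (c+1) := by
  ext j
  rw [Finsupp.add_apply]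
  fin_cases j <;> simp [Finsupp.single_apply]

lemma fp_sum (a b c : ℕ) : ((fp a b c).sum fun _ e => e) = a + b + c := by
  rw [Finsupp.sum_fintype _ _ (fun _ => rfl)]
  rw [Fin.sum_univ_three]
  simp

lemma fp_surj (d : Fin 3 →₀ ℕ) : d = fp (d 0) (d 1) (d 2) := by
  ext j
  fin_cases j <;> simp

lemma coeff_pderiv (i : Fin 3) (m : Fin 3 →₀ ℕ) (f : MvPolynomial (Fin 3) ℝ) :
    coeff m (pderiv i f) = ((m i + 1 : ℕ) : ℝ) * coeff (m + Finsupp.single i 1) f := by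
  induction f using MvPolynomial.induction_on' with
  | add p q hp hq => simp [hp, hq, mul_add]
  | monomial s a =>
    rw [pderiv_monomial, coeff_monomial, coeff_monomial]
    rcases Nat.eq_zero_or_pos (s i) with hsi | hsi
    · have hsub : s - Finsupp.single i 1 = s := by
        ext j
        rw [Finsupp.tsub_apply]
        rcases eq_or_ne j i with rfl | hj
        · simp [hsi]
        · rw [Finsupp.single_eq_of_ne hj]
          simp
      have hne : s ≠ m + Finsupp.single i 1 := by
        intro hh
        have h2 : s i = ((m + Finsupp.single i 1 : Fin 3 →₀ ℕ)) i := by rw [hh]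
        simp only [Finsupp.add_apply, Finsupp.single_eq_same] at h2
        omega
      rw [hsub, if_neg hne]
      split_ifs with h
      · simp [hsi]
      · ring
    · have hiff : (s - Finsupp.single i 1 = m) ↔ (s = m + Finsupp.single i 1) := by
        constructor
        · intro hh
          ext j
          have hj : ((s - Finsupp.single i 1 : Fin 3 →₀ ℕ)) j = m j := by rw [hh]
          rw [Finsupp.tsub_apply] at hj
          rw [Finsupp.add_apply]
          rcases eq_or_ne j i with rfl | hne
          · rw [Finsupp.single_eq_same] at hj ⊢
            omega
          · rw [Finsupp.single_eq_of_ne hne] at hj ⊢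
            omega
        · intro hh; rw [hh]; exact add_tsub_cancel_right _ _
      by_cases h : s = m + Finsupp.single i 1
      · rw [if_pos (hiff.2 h), if_pos h]
        have hs2 : s i = m i + 1 := by
          rw [h]
          simp only [Finsupp.add_apply, Finsupp.single_eq_same]
        rw [hs2]; push_cast; ring
      · rw [if_neg (fun hh => h (hiff.1 hh)), if_neg h]; ring


variable {α β κ lam : ℝ} (h : MvPolynomial (Fin 3) ℝ)

lemma coeff_term1 (a b c : ℕ) :
    coeff (fp a b c) (pderiv 0 h * X 1 * X 0)
      = if 1 ≤ a ∧ 1 ≤ b then (a:ℝ) * coeff (fp a (b-1) c) h else 0 := by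
  rw [coeff_mul_X']
  by_cases ha : 1 ≤ a
  · rw [if_pos (by rw [Finsupp.mem_support_iff, fp_apply0]; omega), fp_sub0, coeff_mul_X']
    by_cases hb : 1 ≤ b
    · rw [if_pos (by rw [Finsupp.mem_support_iff, fp_apply1]; omega), fp_sub1,
        coeff_pderiv, fp_apply0, fp_add0, if_pos ⟨ha, hb⟩,
        show a - 1 + 1 = a by omega]
    · rw [if_neg (by rw [Finsupp.mem_support_iff, fp_apply1]; omega),
        if_neg (by omega)]
  · rw [if_neg (by rw [Finsupp.mem_support_iff, fp_apply0]; omega),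
      if_neg (by omega)]

lemma coeff_term2 (a b c : ℕ) :
    coeff (fp a b c) (pderiv 0 h * X 0) = (a:ℝ) * coeff (fp a b c) h := by
  rw [coeff_mul_X']
  by_cases ha : 1 ≤ a
  · rw [if_pos (by rw [Finsupp.mem_support_iff, fp_apply0]; omega), fp_sub0,
      coeff_pderiv, fp_apply0, fp_add0, show a - 1 + 1 = a by omega]
  · rw [if_neg (by rw [Finsupp.mem_support_iff, fp_apply0]; omega),
      show a = 0 by omega]
    norm_num

lemma coeff_term3 (a b c : ℕ) :
    coeff (fp a b c) (C β * (pderiv 0 h * X 2))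
      = if 1 ≤ c then β*((a:ℝ)+1) * coeff (fp (a+1) b (c-1)) h else 0 := by
  rw [coeff_C_mul, coeff_mul_X']
  by_cases hc : 1 ≤ c
  · rw [if_pos (by rw [Finsupp.mem_support_iff, fp_apply2]; omega), fp_sub2,
      coeff_pderiv, fp_apply0, fp_add0, if_pos hc]
    push_cast; ring
  · rw [if_neg (by rw [Finsupp.mem_support_iff, fp_apply2]; omega),
      if_neg (by omega)]
    ring

lemma coeff_term4 (a b c : ℕ) :
    coeff (fp a b c) (C α * pderiv 1 h) = α*((b:ℝ)+1) * coeff (fp a (b+1) c) h := by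
  rw [coeff_C_mul, coeff_pderiv, fp_apply1, fp_add1]
  push_cast; ring

lemma coeff_term5 (a b c : ℕ) :
    coeff (fp a b c) (C α * (pderiv 1 h * X 0 * X 0))
      = if 2 ≤ a then α*((b:ℝ)+1) * coeff (fp (a-2) (b+1) c) h else 0 := by
  rw [coeff_C_mul, coeff_mul_X']
  by_cases ha : 1 ≤ a
  · rw [if_pos (by rw [Finsupp.mem_support_iff, fp_apply0]; omega), fp_sub0, coeff_mul_X']
    by_cases ha2 : 2 ≤ a
    · rw [if_pos (by rw [Finsupp.mem_support_iff, fp_apply0]; omega), fp_sub0,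
        coeff_pderiv, fp_apply1, fp_add1, if_pos ha2,
        show a - 1 - 1 = a - 2 by omega]
      push_cast; ring
    · rw [if_neg (by rw [Finsupp.mem_support_iff, fp_apply0]; omega), if_neg (by omega)]
      ring
  · rw [if_neg (by rw [Finsupp.mem_support_iff, fp_apply0]; omega), if_neg (by omega)]
    ring

lemma coeff_term6 (a b c : ℕ) :
    coeff (fp a b c) (C κ * (pderiv 1 h * X 1)) = κ*(b:ℝ) * coeff (fp a b c) h := by
  rw [coeff_C_mul, coeff_mul_X']
  by_cases hb : 1 ≤ b
  · rw [if_pos (by rw [Finsupp.mem_support_iff, fp_apply1]; omega), fp_sub1,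
      coeff_pderiv, fp_apply1, fp_add1, show b - 1 + 1 = b by omega]
    push_cast; ring
  · rw [if_neg (by rw [Finsupp.mem_support_iff, fp_apply1]; omega),
      show b = 0 by omega]
    norm_num

lemma coeff_term7 (a b c : ℕ) :
    coeff (fp a b c) (pderiv 2 h * X 0)
      = if 1 ≤ a then ((c:ℝ)+1) * coeff (fp (a-1) b (c+1)) h else 0 := by
  rw [coeff_mul_X']
  by_cases ha : 1 ≤ a
  · rw [if_pos (by rw [Finsupp.mem_support_iff, fp_apply0]; omega), fp_sub0,
      coeff_pderiv, fp_apply2, fp_add2, if_pos ha]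
    push_cast; ring
  · rw [if_neg (by rw [Finsupp.mem_support_iff, fp_apply0]; omega), if_neg (by omega)]

lemma coeff_term8 (a b c : ℕ) :
    coeff (fp a b c) (C lam * (pderiv 2 h * X 2)) = lam*(c:ℝ) * coeff (fp a b c) h := by
  rw [coeff_C_mul, coeff_mul_X']
  by_cases hc : 1 ≤ c
  · rw [if_pos (by rw [Finsupp.mem_support_iff, fp_apply2]; omega), fp_sub2,
      coeff_pderiv, fp_apply2, fp_add2, show c - 1 + 1 = c by omega]
    push_cast; ring
  · rw [if_neg (by rw [Finsupp.mem_support_iff, fp_apply2]; omega),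
      show c = 0 by omega]
    norm_num

lemma master_nat
    (hint : (X 0 * (X 1 - 1) - C β * X 2) * pderiv 0 h
      + (C α * (1 - X 0 ^ 2) - C κ * X 1) * pderiv 1 h
      + (X 0 - C lam * X 2) * pderiv 2 h = 0) (a b c : ℕ) :
    (if 1 ≤ a ∧ 1 ≤ b then (a:ℝ) * coeff (fp a (b-1) c) h else 0)
    - (a:ℝ) * coeff (fp a b c) h
    - (if 1 ≤ c then β*((a:ℝ)+1) * coeff (fp (a+1) b (c-1)) h else 0)
    + α*((b:ℝ)+1) * coeff (fp a (b+1) c) h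
    - (if 2 ≤ a then α*((b:ℝ)+1) * coeff (fp (a-2) (b+1) c) h else 0)
    - κ*(b:ℝ) * coeff (fp a b c) h
    + (if 1 ≤ a then ((c:ℝ)+1) * coeff (fp (a-1) b (c+1)) h else 0)
    - lam*(c:ℝ) * coeff (fp a b c) h = 0 := by
  have e : (X 0 * (X 1 - 1) - C β * X 2) * pderiv 0 h
      + (C α * (1 - X 0 ^ 2) - C κ * X 1) * pderiv 1 h
      + (X 0 - C lam * X 2) * pderiv 2 h
    = pderiv 0 h * X 1 * X 0 - pderiv 0 h * X 0 - C β * (pderiv 0 h * X 2)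
      + C α * pderiv 1 h - C α * (pderiv 1 h * X 0 * X 0) - C κ * (pderiv 1 h * X 1)
      + pderiv 2 h * X 0 - C lam * (pderiv 2 h * X 2) := by ring
  have H0 : coeff (fp a b c) (pderiv 0 h * X 1 * X 0 - pderiv 0 h * X 0
      - C β * (pderiv 0 h * X 2)
      + C α * pderiv 1 h - C α * (pderiv 1 h * X 0 * X 0) - C κ * (pderiv 1 h * X 1)
      + pderiv 2 h * X 0 - C lam * (pderiv 2 h * X 2)) = 0 := by
    rw [← e, hint, coeff_zero]
  simp only [coeff_add, coeff_sub] at H0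
  rw [coeff_term1, coeff_term2, coeff_term3, coeff_term4, coeff_term5, coeff_term6,
    coeff_term7, coeff_term8] at H0
  exact H0


/-- The coefficient function of `h`, extended by zero to integer indices. -/
noncomputable def HZ : ℤ → ℤ → ℤ → ℝ := fun a b c =>
  if 0 ≤ a ∧ 0 ≤ b ∧ 0 ≤ c then coeff (fp a.toNat b.toNat c.toNat) h else 0

lemma HZzero (a b c : ℤ) (hneg : a < 0 ∨ b < 0 ∨ c < 0) : HZ h a b c = 0 := by
  rw [HZ, if_neg (by omega)]

lemma HZcoe (x y z : ℤ) (hx : 0 ≤ x) (hy : 0 ≤ y) (hz : 0 ≤ z) :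
    HZ h x y z = coeff (fp x.toNat y.toNat z.toNat) h := if_pos ⟨hx, hy, hz⟩

lemma zmaster
    (hint : (X 0 * (X 1 - 1) - C β * X 2) * pderiv 0 h
      + (C α * (1 - X 0 ^ 2) - C κ * X 1) * pderiv 1 h
      + (X 0 - C lam * X 2) * pderiv 2 h = 0) (a b c : ℤ) :
    (a:ℝ) * HZ h a (b-1) c - (a:ℝ) * HZ h a b c - β*((a:ℝ)+1)*HZ h (a+1) b (c-1)
      + α*((b:ℝ)+1)*HZ h a (b+1) c - α*((b:ℝ)+1)*HZ h (a-2) (b+1) c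
      - κ*(b:ℝ)*HZ h a b c
      + ((c:ℝ)+1)*HZ h (a-1) b (c+1) - lam*(c:ℝ)*HZ h a b c = 0 := by
  rcases lt_or_ge a 0 with ha | ha
  · rw [HZzero h a (b-1) c (by omega), HZzero h a b c (by omega),
      HZzero h a (b+1) c (by omega), HZzero h (a-2) (b+1) c (by omega),
      HZzero h (a-1) b (c+1) (by omega)]
    have t3 : β*((a:ℝ)+1)*HZ h (a+1) b (c-1) = 0 := by
      rcases eq_or_ne a (-1) with rfl | hne
      · norm_num
      · rw [HZzero h (a+1) b (c-1) (by omega)]; ring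
    linear_combination -t3
  rcases lt_or_ge b 0 with hb | hb
  · rw [HZzero h a (b-1) c (by omega), HZzero h a b c (by omega),
      HZzero h (a+1) b (c-1) (by omega), HZzero h (a-1) b (c+1) (by omega)]
    have t4 : α*((b:ℝ)+1)*HZ h a (b+1) c = 0 := by
      rcases eq_or_ne b (-1) with rfl | hne
      · norm_num
      · rw [HZzero h a (b+1) c (by omega)]; ring
    have t5 : α*((b:ℝ)+1)*HZ h (a-2) (b+1) c = 0 := by
      rcases eq_or_ne b (-1) with rfl | hne
      · norm_num
      · rw [HZzero h (a-2) (b+1) c (by omega)]; ring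
    linear_combination t4 - t5
  rcases lt_or_ge c 0 with hc | hc
  · rw [HZzero h a (b-1) c (by omega), HZzero h a b c (by omega),
      HZzero h (a+1) b (c-1) (by omega), HZzero h a (b+1) c (by omega),
      HZzero h (a-2) (b+1) c (by omega)]
    have t7 : ((c:ℝ)+1)*HZ h (a-1) b (c+1) = 0 := by
      rcases eq_or_ne c (-1) with rfl | hne
      · norm_num
      · rw [HZzero h (a-1) b (c+1) (by omega)]; ring
    linear_combination t7
  -- all nonnegative
  obtain ⟨a', rfl⟩ : ∃ a' : ℕ, a = (a':ℤ) := ⟨a.toNat, by omega⟩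
  obtain ⟨b', rfl⟩ : ∃ b' : ℕ, b = (b':ℤ) := ⟨b.toNat, by omega⟩
  obtain ⟨c', rfl⟩ : ∃ c' : ℕ, c = (c':ℤ) := ⟨c.toNat, by omega⟩
  have M := master_nat h hint a' b' c'
  have e1 : (a':ℝ) * HZ h a' ((b':ℤ)-1) c'
      = (if 1 ≤ a' ∧ 1 ≤ b' then (a':ℝ) * coeff (fp a' (b'-1) c') h else 0) := by
    by_cases hb1 : 1 ≤ b'
    · rw [HZcoe h _ _ _ (by omega) (by omega) (by omega)]
      rw [show ((a':ℤ)).toNat = a' by omega, show ((b':ℤ)-1).toNat = b'-1 by omega,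
        show ((c':ℤ)).toNat = c' by omega]
      by_cases ha1 : 1 ≤ a'
      · rw [if_pos ⟨ha1, hb1⟩]
      · rw [if_neg (by omega), show a' = 0 by omega]
        norm_num
    · rw [HZzero h _ _ _ (by omega), if_neg (by omega)]
      ring
  have e2 : HZ h a' b' c' = coeff (fp a' b' c') h := by
    rw [HZcoe h _ _ _ (by omega) (by omega) (by omega)]
    rw [show ((a':ℤ)).toNat = a' by omega, show ((b':ℤ)).toNat = b' by omega,
      show ((c':ℤ)).toNat = c' by omega]
  have e3 : β*((a':ℝ)+1)*HZ h ((a':ℤ)+1) b' ((c':ℤ)-1)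
      = (if 1 ≤ c' then β*((a':ℝ)+1) * coeff (fp (a'+1) b' (c'-1)) h else 0) := by
    by_cases hc1 : 1 ≤ c'
    · rw [HZcoe h _ _ _ (by omega) (by omega) (by omega)]
      rw [show ((a':ℤ)+1).toNat = a'+1 by omega, show ((b':ℤ)).toNat = b' by omega,
        show ((c':ℤ)-1).toNat = c'-1 by omega, if_pos hc1]
    · rw [HZzero h _ _ _ (by omega), if_neg (by omega)]
      ring
  have e4 : α*((b':ℝ)+1)*HZ h a' ((b':ℤ)+1) c'
      = α*((b':ℝ)+1) * coeff (fp a' (b'+1) c') h := by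
    rw [HZcoe h _ _ _ (by omega) (by omega) (by omega)]
    rw [show ((a':ℤ)).toNat = a' by omega, show ((b':ℤ)+1).toNat = b'+1 by omega,
      show ((c':ℤ)).toNat = c' by omega]
  have e5 : α*((b':ℝ)+1)*HZ h ((a':ℤ)-2) ((b':ℤ)+1) c'
      = (if 2 ≤ a' then α*((b':ℝ)+1) * coeff (fp (a'-2) (b'+1) c') h else 0) := by
    by_cases ha2 : 2 ≤ a'
    · rw [HZcoe h _ _ _ (by omega) (by omega) (by omega)]
      rw [show ((a':ℤ)-2).toNat = a'-2 by omega, show ((b':ℤ)+1).toNat = b'+1 by omega,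
        show ((c':ℤ)).toNat = c' by omega, if_pos ha2]
    · rw [HZzero h _ _ _ (by omega), if_neg (by omega)]
      ring
  have e7 : ((c':ℝ)+1)*HZ h ((a':ℤ)-1) b' ((c':ℤ)+1)
      = (if 1 ≤ a' then ((c':ℝ)+1) * coeff (fp (a'-1) b' (c'+1)) h else 0) := by
    by_cases ha1 : 1 ≤ a'
    · rw [HZcoe h _ _ _ (by omega) (by omega) (by omega)]
      rw [show ((a':ℤ)-1).toNat = a'-1 by omega, show ((b':ℤ)).toNat = b' by omega,
        show ((c':ℤ)+1).toNat = c'+1 by omega, if_pos ha1]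
    · rw [HZzero h _ _ _ (by omega), if_neg (by omega)]
      ring
  push_cast
  push_cast at e1 e2 e3 e4 e5 e7 M
  rw [e1, e2, e3, e4, e5, e7]
  linarith [M]


end HSAProof

open HSAProof in
/-- With α ≠ 0 and (αβ ≠ 0 or ακ ≠ 0), the HSA dynamo admits no
polynomial first integral: every polynomial h with X h = 0 is constant. -/
theorem stmt_6 (α β κ lam : ℝ) (hα : α ≠ 0) (h' : α * β ≠ 0 ∨ α * κ ≠ 0)
    (h : MvPolynomial (Fin 3) ℝ)
    (hint : (X 0 * (X 1 - 1) - C β * X 2) * pderiv 0 h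
      + (C α * (1 - X 0 ^ 2) - C κ * X 1) * pderiv 1 h
      + (X 0 - C lam * X 2) * pderiv 2 h = 0) :
    ∃ c : ℝ, h = C c := by
  by_cases hn : h.totalDegree = 0
  · refine ⟨coeff 0 h, ?_⟩
    apply MvPolynomial.ext
    intro d
    rw [coeff_C]
    rcases eq_or_ne (0 : Fin 3 →₀ ℕ) d with rfl | hd
    · rw [if_pos rfl]
    · rw [if_neg hd]
      apply coeff_eq_zero_of_totalDegree_lt
      have hconv : (∑ i ∈ d.support, d i) = (d.sum fun _ e => e) := rfl
      rw [hn, hconv]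
      have hd2 : d 0 + d 1 + d 2 ≠ 0 := by
        intro hzero
        apply hd
        rw [fp_surj d, show d 0 = 0 by omega, show d 1 = 0 by omega,
          show d 2 = 0 by omega]
        ext j
        fin_cases j <;> simp
      calc (0:ℕ) < d 0 + d 1 + d 2 := by omega
        _ = ((fp (d 0) (d 1) (d 2)).sum fun _ e => e) := (fp_sum _ _ _).symm
        _ = (d.sum fun _ e => e) := by rw [← fp_surj d]
  · exfalso
    have hβκ : β ≠ 0 ∨ κ ≠ 0 := by
      rcases h' with hh | hh
      · exact Or.inl (fun h0 => hh (by rw [h0, mul_zero]))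
      · exact Or.inr (fun h0 => hh (by rw [h0, mul_zero]))
    have hS : HSA α β κ lam (HZ h) ((h.totalDegree : ℕ) : ℤ) := by
      refine ⟨HZzero h, ?_, zmaster h hint⟩
      intro a b c hlt
      rcases lt_or_ge a 0 with hsgn | hsgn
      · exact HZzero h a b c (by omega)
      rcases lt_or_ge b 0 with hsgn2 | hsgn2
      · exact HZzero h a b c (by omega)
      rcases lt_or_ge c 0 with hsgn3 | hsgn3
      · exact HZzero h a b c (by omega)
      rw [HZcoe h a b c hsgn hsgn2 hsgn3]
      apply coeff_eq_zero_of_totalDegree_lt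
      have : (∑ i ∈ (fp a.toNat b.toNat c.toNat).support, (fp a.toNat b.toNat c.toNat) i)
          = ((fp a.toNat b.toNat c.toNat).sum fun _ e => e) := rfl
      rw [this, fp_sum]
      omega
    have hn1 : 1 ≤ ((h.totalDegree : ℕ) : ℤ) := by
      have : 1 ≤ h.totalDegree := Nat.one_le_iff_ne_zero.2 hn
      exact_mod_cast this
    have hne0 : h ≠ 0 := by
      intro hh
      exact hn (by rw [hh]; exact totalDegree_zero)
    have hsup : h.support.Nonempty := by
      rw [Finset.nonempty_iff_ne_empty]
      intro hh
      exact hne0 (support_eq_empty.1 hh)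
    obtain ⟨d, hd, hdeq⟩ :=
      Finset.exists_mem_eq_sup h.support hsup (fun s : Fin 3 →₀ ℕ => s.sum fun _ e => e)
    have hco : coeff d h ≠ 0 := mem_support_iff.1 hd
    have hsum : ((d 0 : ℤ)) + (d 1) + (d 2) = ((h.totalDegree : ℕ) : ℤ) := by
      have : h.totalDegree = d 0 + d 1 + d 2 := by
        rw [show h.totalDegree = h.support.sup (fun s : Fin 3 →₀ ℕ => s.sum fun _ e => e)
          from rfl, hdeq]
        conv_lhs => rw [fp_surj d]
        rw [show ((fp (d 0) (d 1) (d 2)).sum fun _ e => e)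
          = (fp (d 0) (d 1) (d 2)).sum (fun _ e => e) from rfl, fp_sum]
      exact_mod_cast this.symm
    have hzero := topzero hS hα hβκ hn1 (d 0) (d 1) (d 2) hsum
    rw [HZcoe h _ _ _ (by omega) (by omega) (by omega)] at hzero
    rw [show ((d 0 : ℤ)).toNat = d 0 by omega, show ((d 1 : ℤ)).toNat = d 1 by omega,
      show ((d 2 : ℤ)).toNat = d 2 by omega, ← fp_surj d] at hzero
    exact hco hzero
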